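/- Median-of-means concentration: let X be a real random variable with mean μ and variance σ². For γ > 0, taking K independent sample means, each over L = ⌈34σ²/γ²⌉ i.i.d. copies of X, the median μ̂(L,K) of these K means satisfies Pr[|μ̂(L,K) − μ| ≥ γ] ≤ 2e^{−K/2}. -/

import Mathlib

open MeasureTheory ProbabilityTheory
open Finset
open scoped ENNReal

lemma mom_aux_indep {Ω : Type*} [MeasureSpace Ω] [IsProbabilityMeasure (ℙ : Measure Ω)]
    {K L : ℕ} (X : Fin K × Fin L → Ω → ℝ)
    (hmeas : ∀ p, Measurable (X p))
    (hindep : iIndepFun X ℙ)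
    (Y : Fin K → Ω → ℝ) (hY : ∀ k ω, Y k ω = (∑ l, X (k, l) ω) / L)
    (s : Fin K → Set ℝ) (hs : ∀ k, MeasurableSet (s k)) :
    ∀ T : Finset (Fin K), ℙ (⋂ k ∈ T, Y k ⁻¹' s k) = ∏ k ∈ T, ℙ (Y k ⁻¹' s k) := by
  classical
  intro T
  induction T using Finset.induction_on with
  | empty => simp
  | @insert a T' ha ih =>
    have hdisj : Disjoint ({a} ×ˢ (univ : Finset (Fin L))) (T' ×ˢ (univ : Finset (Fin L))) := by
      rw [Finset.disjoint_left]
      rintro ⟨k, l⟩ hp hq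
      simp only [Finset.mem_product, Finset.mem_singleton] at hp hq
      exact ha (hp.1 ▸ hq.1)
    have key := hindep.indepFun_finset ({a} ×ˢ (univ : Finset (Fin L)))
      (T' ×ˢ (univ : Finset (Fin L))) hdisj hmeas
    set Wa : ((({a} ×ˢ (univ : Finset (Fin L))) : Finset (Fin K × Fin L)) → ℝ) → ℝ :=
      fun v => (∑ l, v ⟨(a, l), by simp⟩) / L with hWa
    set WT : (((T' ×ˢ (univ : Finset (Fin L))) : Finset (Fin K × Fin L)) → ℝ) → Fin K → ℝ :=
      fun v k => (∑ l, if h : (k, l) ∈ T' ×ˢ (univ : Finset (Fin L)) then v ⟨(k, l), h⟩ else 0) / L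
      with hWT
    have hWameas : Measurable Wa := by
      apply Measurable.div_const
      exact Finset.measurable_sum _ fun l _ => measurable_pi_apply _
    have hWTmeas : ∀ k, Measurable (fun v => WT v k) := by
      intro k
      apply Measurable.div_const
      apply Finset.measurable_sum
      intro l _
      by_cases h : (k, l) ∈ T' ×ˢ (univ : Finset (Fin L))
      · simp only [dif_pos h]
        exact measurable_pi_apply _
      · simp only [dif_neg h]
        exact measurable_const
    set B' : Set ((((T' ×ˢ (univ : Finset (Fin L))) : Finset (Fin K × Fin L))) → ℝ) :=
      ⋂ k ∈ T', (fun v => WT v k) ⁻¹' s k with hB'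
    have hB'meas : MeasurableSet B' :=
      MeasurableSet.biInter (Set.to_countable _) fun k _ => (hWTmeas k) (hs k)
    have hA'meas : MeasurableSet (Wa ⁻¹' s a) := hWameas (hs a)
    have hmul := key.measure_inter_preimage_eq_mul _ _ hA'meas hB'meas
    have hA1 : (fun ω (p : (({a} ×ˢ (univ : Finset (Fin L))) : Finset (Fin K × Fin L))) => X p ω)
        ⁻¹' (Wa ⁻¹' s a) = Y a ⁻¹' s a := by
      ext ω
      simp only [Set.mem_preimage, hWa, hY]
    have hB1 : (fun ω (p : ((T' ×ˢ (univ : Finset (Fin L))) : Finset (Fin K × Fin L))) => X p ω)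
        ⁻¹' B' = ⋂ k ∈ T', Y k ⁻¹' s k := by
      ext ω
      simp only [Set.mem_preimage, hB', Set.mem_iInter]
      refine forall_congr' fun k => forall_congr' fun hk => ?_
      have hkl : ∀ l : Fin L, (k, l) ∈ T' ×ˢ (univ : Finset (Fin L)) := by
        intro l; simp [hk]
      have : WT (fun p => X p ω) k = Y k ω := by
        simp only [hWT, hY]
        congr 1
        refine Finset.sum_congr rfl fun l _ => ?_
        rw [dif_pos (hkl l)]
      rw [this]
    rw [Finset.set_biInter_insert, Finset.prod_insert ha, ← ih, ← hA1, ← hB1]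
    exact hmul


/-- Median-of-means concentration: for i.i.d. real random variables with mean `μm` and variance
`σ²`, partitioned into `K` groups of size `L = ⌈34σ²/γ²⌉`, the median of the `K` group means
deviates from `μm` by at least `γ` with probability at most `2e^{−K/2}`. The median of the `K`
group means is the `⌊K/2⌋`-th entry of the sorted tuple of means. -/
theorem stmt19 {Ω : Type*} [MeasureSpace Ω] [IsProbabilityMeasure (ℙ : Measure Ω)]
    (K L : ℕ) (hK : 0 < K) (hL : 0 < L) (μm σ γ : ℝ) (hγ : 0 < γ)
    (hLdef : L = ⌈34 * σ ^ 2 / γ ^ 2⌉₊)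
    (X : Fin K × Fin L → Ω → ℝ)
    (hmeas : ∀ p, Measurable (X p))
    (hindep : iIndepFun X ℙ)
    (hident : ∀ p q, IdentDistrib (X p) (X q) ℙ ℙ)
    (hint : ∀ p, Integrable (X p) ℙ)
    (hmean : ∀ p, ∫ ω, X p ω ∂ℙ = μm)
    (hvar : ∀ p, variance (X p) ℙ = σ ^ 2) :
    (ℙ {ω | γ ≤
        |(fun k => (∑ l, X (k, l) ω) / (L : ℝ))
            ((Tuple.sort fun k => (∑ l, X (k, l) ω) / (L : ℝ))
              ⟨K / 2, Nat.div_lt_self hK one_lt_two⟩) - μm|}).toReal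
      ≤ 2 * Real.exp (-(K : ℝ) / 2) := by
  classical
  -- positivity of σ²
  have hσ2 : 0 < σ ^ 2 := by
    rcases lt_or_eq_of_le (sq_nonneg σ) with h | h
    · exact h
    · exfalso
      rw [hLdef, ← h] at hL
      norm_num at hL
  have hLreal : 34 * σ ^ 2 / γ ^ 2 ≤ (L : ℝ) := by rw [hLdef]; exact Nat.le_ceil _
  have hLpos : (0 : ℝ) < L := by exact_mod_cast hL
  -- Memℒp
  have hmem : ∀ p, MemLp (X p) 2 ℙ := by
    intro p
    have h1 : evariance (X p) ℙ < ⊤ := by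
      by_contra h
      rw [not_lt, top_le_iff] at h
      have h2 := hvar p
      rw [variance, h, ENNReal.toReal_top] at h2
      exact absurd h2.symm (ne_of_gt hσ2)
    exact (evariance_lt_top_iff_memLp (hmeas p).aestronglyMeasurable).1 h1
  -- group means
  set Y : Fin K → Ω → ℝ := fun k ω => (∑ l, X (k, l) ω) / L with hYdef
  have hY : ∀ k ω, Y k ω = (∑ l, X (k, l) ω) / L := fun _ _ => rfl
  set sev : Fin K → Set ℝ := fun _ => {x : ℝ | γ ≤ |x - μm|} with hsev
  have hsevmeas : ∀ k, MeasurableSet (sev k) := fun k =>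
    measurableSet_le measurable_const ((measurable_id.sub_const μm).abs)
  set A : Fin K → Set Ω := fun k => Y k ⁻¹' sev k with hAdef
  -- Chebyshev bound for each group
  have hcheb : ∀ k, ℙ (A k) ≤ ENNReal.ofReal (1 / 34) := by
    intro k
    set S : Ω → ℝ := fun ω => ∑ l, X (k, l) ω with hS
    have hSmem : MemLp S 2 ℙ := memLp_finset_sum _ fun l _ => hmem (k, l)
    have hSmean : ∫ ω, S ω ∂ℙ = L * μm := by
      rw [hS]
      rw [integral_finset_sum _ fun l (_ : l ∈ Finset.univ) => hint (k, l)]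
      simp [hmean, mul_comm]
    have hSvar : variance S ℙ = L * σ ^ 2 := by
      have heq : S = ∑ l : Fin L, X (k, l) := by
        funext ω; simp [hS, Finset.sum_apply]
      rw [heq, IndepFun.variance_sum (fun l _ => hmem (k, l))
        (fun l _ l' _ hne => hindep.indepFun (by simp [Prod.ext_iff, hne]))]
      simp [hvar, mul_comm]
    have hcheb' := meas_ge_le_variance_div_sq (μ := ℙ) hSmem
      (c := (L : ℝ) * γ) (by positivity)
    have hset : A k = {ω | (L : ℝ) * γ ≤ |S ω - ∫ x, S x ∂ℙ|} := by
      ext ω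
      simp only [hAdef, Set.mem_preimage, hsev, Set.mem_setOf_eq, hSmean]
      have h1 : Y k ω - μm = (S ω - L * μm) / L := by
        rw [hY, hS]; field_simp
      rw [h1, abs_div, abs_of_pos hLpos, le_div_iff₀ hLpos, mul_comm]
    rw [hset]
    refine le_trans hcheb' (ENNReal.ofReal_le_ofReal ?_)
    rw [hSvar, div_le_iff₀ (by positivity)]
    have h34 : 34 * σ ^ 2 ≤ (L : ℝ) * γ ^ 2 := by
      rw [div_le_iff₀ (by positivity)] at hLreal
      linarith
    have hL1 : (L : ℝ) * (34 * σ ^ 2) ≤ (L : ℝ) * ((L : ℝ) * γ ^ 2) :=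
      mul_le_mul_of_nonneg_left h34 hLpos.le
    nlinarith
  -- combinatorics
  set m : ℕ := K - K / 2 with hm
  have hKm : K ≤ 2 * m := by omega
  have hmK : m ≤ K := by omega
  have hsub : {ω | γ ≤
        |(fun k => (∑ l, X (k, l) ω) / (L : ℝ))
            ((Tuple.sort fun k => (∑ l, X (k, l) ω) / (L : ℝ))
              ⟨K / 2, Nat.div_lt_self hK one_lt_two⟩) - μm|}
      ⊆ ⋃ T ∈ Finset.univ.powersetCard m, ⋂ k ∈ T, A k := by
    intro ω hω
    simp only [Set.mem_setOf_eq] at hω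
    set f : Fin K → ℝ := fun k => (∑ l, X (k, l) ω) / (L : ℝ) with hf
    set st := Tuple.sort f with hst
    have hmono := Tuple.monotone_sort f
    set i0 : Fin K := ⟨K / 2, Nat.div_lt_self hK one_lt_two⟩ with hi0
    have hAf : ∀ k, γ ≤ |f k - μm| → ω ∈ A k := by
      intro k hk
      simp only [hAdef, Set.mem_preimage, hsev, Set.mem_setOf_eq]
      exact hk
    rcases le_abs.mp hω with h | h
    · -- upward deviation
      refine Set.mem_iUnion₂.mpr
        ⟨Finset.image (fun j : Fin m => st ⟨K / 2 + j.1, by have := j.2; omega⟩) Finset.univ,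
         ?_, ?_⟩
      · rw [Finset.mem_powersetCard_univ,
          Finset.card_image_of_injective _ ?_, Finset.card_univ, Fintype.card_fin]
        intro j j' hjj'
        have h2 := st.injective hjj'
        simp only [Fin.mk.injEq] at h2
        exact Fin.ext (by omega)
      · refine Set.mem_iInter₂.mpr ?_
        intro k hkmem
        rcases Finset.mem_image.mp hkmem with ⟨j, _, rfl⟩
        apply hAf
        have hle : f (st i0) ≤ f (st ⟨K / 2 + j.1, by have := j.2; omega⟩) := by
          apply hmono
          simp only [Fin.le_def, hi0]
          omega
        have : γ ≤ f (st ⟨K / 2 + j.1, by have := j.2; omega⟩) - μm := by linarith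
        exact le_trans this (le_abs_self _)
    · -- downward deviation
      refine Set.mem_iUnion₂.mpr
        ⟨Finset.image (fun j : Fin m => st ⟨j.1, by have := j.2; omega⟩) Finset.univ,
         ?_, ?_⟩
      · rw [Finset.mem_powersetCard_univ,
          Finset.card_image_of_injective _ ?_, Finset.card_univ, Fintype.card_fin]
        intro j j' hjj'
        have h2 := st.injective hjj'
        simp only [Fin.mk.injEq] at h2
        exact Fin.ext h2
      · refine Set.mem_iInter₂.mpr ?_
        intro k hkmem
        rcases Finset.mem_image.mp hkmem with ⟨j, _, rfl⟩
        apply hAf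
        have hle : f (st ⟨j.1, by have := j.2; omega⟩) ≤ f (st i0) := by
          apply hmono
          simp only [Fin.le_def, hi0]
          have := j.2
          omega
        have : γ ≤ -(f (st ⟨j.1, by have := j.2; omega⟩) - μm) := by linarith
        exact le_trans this (neg_le_abs _)
  -- measure bound
  have hprod := mom_aux_indep X hmeas hindep Y hY sev hsevmeas
  have hbound : ℙ {ω | γ ≤
        |(fun k => (∑ l, X (k, l) ω) / (L : ℝ))
            ((Tuple.sort fun k => (∑ l, X (k, l) ω) / (L : ℝ))
              ⟨K / 2, Nat.div_lt_self hK one_lt_two⟩) - μm|}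
      ≤ (K.choose m : ℝ≥0∞) * ENNReal.ofReal (1 / 34) ^ m := by
    refine le_trans (measure_mono hsub) ?_
    refine le_trans (measure_biUnion_finset_le _ _) ?_
    have h1 : ∀ T ∈ Finset.univ.powersetCard m,
        ℙ (⋂ k ∈ T, A k) ≤ ENNReal.ofReal (1 / 34) ^ m := by
      intro T hT
      rw [hprod T]
      have hcard : T.card = m := Finset.mem_powersetCard_univ.mp hT
      calc ∏ k ∈ T, ℙ (Y k ⁻¹' sev k) ≤ ∏ x ∈ T, ENNReal.ofReal (1 / 34) :=
            Finset.prod_le_prod' fun k _ => hcheb k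
        _ = ENNReal.ofReal (1 / 34) ^ m := by rw [Finset.prod_const, hcard]
    refine le_trans (Finset.sum_le_sum h1) ?_
    rw [Finset.sum_const, Finset.card_powersetCard, Finset.card_univ, Fintype.card_fin,
      nsmul_eq_mul]
  -- numeric bound
  have hnum : (K.choose m : ℝ≥0∞) * ENNReal.ofReal (1 / 34) ^ m
      ≤ ENNReal.ofReal (2 * Real.exp (-(K : ℝ) / 2)) := by
    rw [← ENNReal.ofReal_pow (by norm_num), ← ENNReal.ofReal_natCast,
      ← ENNReal.ofReal_mul (by positivity)]
    refine ENNReal.ofReal_le_ofReal ?_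
    have hchoose : (K.choose m : ℝ) ≤ 2 ^ K := by
      have h1 : K.choose m ≤ 2 ^ K := by
        calc K.choose m ≤ ∑ i ∈ Finset.range (K + 1), K.choose i :=
              Finset.single_le_sum (fun i _ => Nat.zero_le _)
                (Finset.mem_range.mpr (by omega))
          _ = 2 ^ K := Nat.sum_range_choose K
      exact_mod_cast h1
    have hexp1 : (2 : ℝ) / 17 ≤ Real.exp (-1) := by
      rw [Real.exp_neg, le_inv_comm₀ (by norm_num) (Real.exp_pos 1)]
      calc Real.exp 1 ≤ 2.7182818286 := (Real.exp_one_lt_d9).le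
        _ ≤ (2 / 17)⁻¹ := by norm_num
    calc (K.choose m : ℝ) * (1 / 34) ^ m ≤ 2 ^ K * (1 / 34) ^ m := by
          apply mul_le_mul_of_nonneg_right hchoose (by positivity)
      _ ≤ 4 ^ m * (1 / 34) ^ m := by
          apply mul_le_mul_of_nonneg_right _ (by positivity)
          calc (2 : ℝ) ^ K ≤ 2 ^ (2 * m) := by
                apply pow_le_pow_right₀ (by norm_num) hKm
            _ = 4 ^ m := by rw [pow_mul]; norm_num
      _ = (2 / 17) ^ m := by rw [← mul_pow]; norm_num
      _ ≤ Real.exp (-1) ^ m := pow_le_pow_left₀ (by norm_num) hexp1 m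
      _ = Real.exp (-(m : ℝ)) := by
          rw [← Real.exp_nat_mul]; ring_nf
      _ ≤ Real.exp (-(K : ℝ) / 2) := by
          apply Real.exp_le_exp.mpr
          have : (K : ℝ) ≤ 2 * m := by exact_mod_cast hKm
          linarith
      _ ≤ 2 * Real.exp (-(K : ℝ) / 2) := by
          nlinarith [Real.exp_pos (-(K : ℝ) / 2)]
  exact ENNReal.toReal_le_of_le_ofReal (by positivity) (le_trans hbound hnum)
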